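/- Let β̂_LIML minimize β ↦ (y−Xβ)^T P_Z (y−Xβ) / ((y−Xβ)^T M_Z (y−Xβ)) and assume (y−Xβ̂_LIML)^T M_Z (y−Xβ̂_LIML) > 0. Define X̃ := X − (y − Xβ̂_LIML)·(y − Xβ̂_LIML)^T M_Z X / ((y − Xβ̂_LIML)^T M_Z (y − Xβ̂_LIML)). If X̃^T P_Z X̃ is invertible and 1 + (y − Xβ̂_LIML)^T P_Z Xβ̂_LIML / ((y − Xβ̂_LIML)^T P_Z (y − Xβ̂_LIML)) ≠ 0, then β̂_LIML = (X̃^T P_Z X̃)^{-1} X̃^T P_Z y. -/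

import Mathlib

open Matrix Filter Topology

private lemma quad_coeff_zero {A B : ℝ} (h : ∀ᶠ t in 𝓝 (0:ℝ), 0 ≤ A*t^2 + B*t) : B = 0 := by
  have hmin : IsLocalMin (fun t => A*t^2 + B*t) 0 := by
    filter_upwards [h] with t ht
    simpa using ht
  have hd : HasDerivAt (fun t : ℝ => A*t^2 + B*t) (A*(2*0^1) + B*1) 0 :=
    (((hasDerivAt_pow 2 (0:ℝ)).const_mul A)).add ((hasDerivAt_id (0:ℝ)).const_mul B)
  have := hmin.deriv_eq_zero
  rw [hd.deriv] at this
  simpa using this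

private lemma ratio_foc (N0 D0 a b d e : ℝ) (hD0 : 0 < D0)
    (h : ∀ t : ℝ, N0/D0 ≤ (a*t^2 + b*t + N0)/(d*t^2 + e*t + D0)) : b*D0 = N0*e := by
  have hc : ContinuousAt (fun t : ℝ => d*t^2 + e*t + D0) 0 := by fun_prop
  have hpos : ∀ᶠ t in 𝓝 (0:ℝ), 0 < d*t^2 + e*t + D0 := by
    have h0 : (fun t : ℝ => d*t^2 + e*t + D0) 0 = D0 := by simp
    exact hc.eventually (by rw [h0]; exact eventually_gt_nhds hD0)
  have hq : ∀ᶠ t in 𝓝 (0:ℝ), 0 ≤ (a*D0 - N0*d)*t^2 + (b*D0 - N0*e)*t := by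
    filter_upwards [hpos] with t ht
    have h2 := h t
    rw [div_le_div_iff₀ hD0 ht] at h2
    nlinarith
  have := quad_coeff_zero hq
  linarith

private lemma dot_symm {n : ℕ} (P : Matrix (Fin n) (Fin n) ℝ) (hP : P.IsSymm)
    (a b : Fin n → ℝ) : a ⬝ᵥ P *ᵥ b = b ⬝ᵥ P *ᵥ a := by
  rw [dotProduct_mulVec, dotProduct_comm, ← mulVec_transpose, hP.eq]

private lemma vecMulVec_mulVec' {α β : Type*} [Fintype β] (s : α → ℝ) (u p : β → ℝ) :
    vecMulVec s u *ᵥ p = (u ⬝ᵥ p) • s := by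
  ext j
  simp [vecMulVec, mulVec, dotProduct, Finset.mul_sum, mul_comm, mul_assoc, mul_left_comm]

private lemma dot_single {n m : ℕ} (X : Matrix (Fin n) (Fin m) ℝ) (p : Fin n → ℝ) (j : Fin m) :
    (X *ᵥ Pi.single j 1) ⬝ᵥ p = (Xᵀ *ᵥ p) j := by
  have h1 : X *ᵥ Pi.single j 1 = fun i => X i j := by
    ext i; simp [mulVec_single]
  rw [h1]
  simp [dotProduct, mulVec, transpose_apply]

/-- the LIML estimator, a minimizer of the Anderson–Rubin ratio, is a
two-stage estimator: `β̂_LIML = (X̃ᵀ P_Z X̃)⁻¹ X̃ᵀ P_Z y` where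
`X̃ = X − u (uᵀ M_Z X)/(uᵀ M_Z u)` and `u = y − Xβ̂_LIML`. -/
theorem stmt_8 {n m k : ℕ}
    (y : Fin n → ℝ) (X : Matrix (Fin n) (Fin m) ℝ) (Z : Matrix (Fin n) (Fin k) ℝ)
    (P : Matrix (Fin n) (Fin n) ℝ)
    (hPsymm : P.IsSymm) (hPidem : P * P = P) (hPZ : P * Z = Z)
    (hPrange : ∃ C : Matrix (Fin k) (Fin n) ℝ, P = Z * C)
    (AR : (Fin m → ℝ) → ℝ)
    (hAR : AR = fun β => ((y - X *ᵥ β) ⬝ᵥ P *ᵥ (y - X *ᵥ β)) /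
      ((y - X *ᵥ β) ⬝ᵥ (1 - P) *ᵥ (y - X *ᵥ β)))
    (βhat : Fin m → ℝ) (hmin : ∀ β : Fin m → ℝ, AR βhat ≤ AR β)
    (u : Fin n → ℝ) (hu : u = y - X *ᵥ βhat)
    (hden : 0 < u ⬝ᵥ (1 - P) *ᵥ u)
    (Xt : Matrix (Fin n) (Fin m) ℝ)
    (hXt : Xt = X - (u ⬝ᵥ (1 - P) *ᵥ u)⁻¹ • Matrix.vecMulVec u (((1 - P) * X)ᵀ *ᵥ u))
    (hinv : IsUnit (Xtᵀ * P * Xt).det)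
    (heta : 1 + (u ⬝ᵥ P *ᵥ (X *ᵥ βhat)) / (u ⬝ᵥ P *ᵥ u) ≠ 0) :
    βhat = ((Xtᵀ * P * Xt)⁻¹ * (Xtᵀ * P)) *ᵥ y := by
  set M : Matrix (Fin n) (Fin n) ℝ := 1 - P with hM
  have hMsymm : M.IsSymm := by
    unfold Matrix.IsSymm
    rw [hM, transpose_sub, transpose_one, hPsymm.eq]
  set N0 : ℝ := u ⬝ᵥ P *ᵥ u with hN0
  set D0 : ℝ := u ⬝ᵥ M *ᵥ u with hD0
  -- first-order condition in every coordinate direction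
  have foc : ∀ j : Fin m, (u ⬝ᵥ P *ᵥ (X *ᵥ Pi.single j 1)) * D0
      = N0 * (u ⬝ᵥ M *ᵥ (X *ᵥ Pi.single j 1)) := by
    intro j
    set v : Fin m → ℝ := Pi.single j 1 with hv
    set w : Fin n → ℝ := X *ᵥ v with hw
    have h2 : (-2 * (u ⬝ᵥ P *ᵥ w)) * D0 = N0 * (-2 * (u ⬝ᵥ M *ᵥ w)) := by
      apply ratio_foc N0 D0 (w ⬝ᵥ P *ᵥ w) (-2 * (u ⬝ᵥ P *ᵥ w)) (w ⬝ᵥ M *ᵥ w)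
        (-2 * (u ⬝ᵥ M *ᵥ w)) hden
      intro t
      have key : ∀ Q : Matrix (Fin n) (Fin n) ℝ, Q.IsSymm →
          (y - X *ᵥ (βhat + t • v)) ⬝ᵥ Q *ᵥ (y - X *ᵥ (βhat + t • v))
          = (w ⬝ᵥ Q *ᵥ w) * t^2 + (-2 * (u ⬝ᵥ Q *ᵥ w)) * t + u ⬝ᵥ Q *ᵥ u := by
        intro Q hQ
        have hexp : y - X *ᵥ (βhat + t • v) = u - t • w := by
          rw [hu, hw, mulVec_add, mulVec_smul]
          abel
        rw [hexp]
        have hsym := dot_symm Q hQ w u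
        simp only [sub_dotProduct, dotProduct_sub, mulVec_sub, mulVec_smul, smul_dotProduct,
          dotProduct_smul, smul_eq_mul]
        rw [hsym]; ring
      have h1 := hmin (βhat + t • v)
      rw [hAR] at h1
      simp only at h1
      rw [key P hPsymm, key M hMsymm] at h1
      rw [← hu] at h1
      convert h1 using 2 <;> rw [hu]
    linarith
  -- vector form of the first-order condition
  set s : Fin m → ℝ := (M * X)ᵀ *ᵥ u with hs
  have hs' : s = Xᵀ *ᵥ (M *ᵥ u) := by
    rw [hs, transpose_mul, hMsymm.eq, ← mulVec_mulVec]
  have hXtT : Xtᵀ = Xᵀ - D0⁻¹ • vecMulVec s u := by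
    rw [hXt, transpose_sub, transpose_smul]
    congr 1
    ext i j'
    simp [vecMulVec, mul_comm]
  have hfocv : ∀ j : Fin m, (Xᵀ *ᵥ (P *ᵥ u)) j * D0 = N0 * (Xᵀ *ᵥ (M *ᵥ u)) j := by
    intro j
    have hj := foc j
    rw [dot_symm P hPsymm, dot_symm M hMsymm, dot_single, dot_single] at hj
    exact hj
  -- key orthogonality : X̃ᵀ P u = 0
  have hkey : Xtᵀ *ᵥ (P *ᵥ u) = 0 := by
    rw [hXtT, sub_mulVec, smul_mulVec, hs', vecMulVec_mulVec', ← hN0]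
    ext j
    have hj := hfocv j
    have hD0ne : D0 ≠ 0 := ne_of_gt hden
    simp only [Pi.sub_apply, Pi.smul_apply, smul_eq_mul, Pi.zero_apply]
    rw [← hj]
    field_simp
    simp
  -- normal equations
  have hnormal : (Xtᵀ * P * Xt) *ᵥ βhat = (Xtᵀ * P) *ᵥ y := by
    have hy : y = u + X *ᵥ βhat := by rw [hu]; abel
    have hXtb : Xt *ᵥ βhat = X *ᵥ βhat - (D0⁻¹ * (s ⬝ᵥ βhat)) • u := by
      rw [hXt, sub_mulVec, smul_mulVec, vecMulVec_mulVec', smul_smul]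
    rw [← mulVec_mulVec, ← mulVec_mulVec, hXtb, ← mulVec_mulVec, hy]
    rw [mulVec_add, mulVec_sub, mulVec_smul, mulVec_add, mulVec_sub, mulVec_smul, hkey]
    simp
  have h1 : (Xtᵀ * P * Xt)⁻¹ * (Xtᵀ * P * Xt) = 1 := nonsing_inv_mul _ hinv
  calc βhat = 1 *ᵥ βhat := by rw [one_mulVec]
    _ = ((Xtᵀ * P * Xt)⁻¹ * (Xtᵀ * P * Xt)) *ᵥ βhat := by rw [h1]
    _ = (Xtᵀ * P * Xt)⁻¹ *ᵥ ((Xtᵀ * P * Xt) *ᵥ βhat) := by rw [← mulVec_mulVec]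
    _ = (Xtᵀ * P * Xt)⁻¹ *ᵥ ((Xtᵀ * P) *ᵥ y) := by rw [hnormal]
    _ = ((Xtᵀ * P * Xt)⁻¹ * (Xtᵀ * P)) *ᵥ y := by rw [mulVec_mulVec]
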